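/- k-balanced reachability reduces to balanced reachability: given a directed graph G = (V,E), vertices s, t, and a nonnegative integer k, construct G'' by adding a new vertex t' and a directed path of k new edges from t' to t through new vertices. Then there is a k-balanced walk from s to t in G if and only if there is a balanced walk from s to t' in G''. -/

import Mathlib

variable {V : Type*}

open Classical in
/-- The balance (number of forward edges minus number of backward edges) of a walk,
given as its list of vertices, in the underlying undirected graph of the digraph `E`. -/
noncomputable def bal (E : V → V → Prop) : List V → ℤ
  | u :: v :: r =>
      (if E u v ∧ ¬ E v u then 1 else if E v u ∧ ¬ E u v then -1 else 0) + bal E (v :: r)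
  | _ => 0

open Classical in
noncomputable def stp (E : V → V → Prop) (u v : V) : ℤ :=
  if E u v ∧ ¬ E v u then 1 else if E v u ∧ ¬ E u v then -1 else 0

lemma bal_nil (E : V → V → Prop) : bal E ([] : List V) = 0 := rfl
lemma bal_single (E : V → V → Prop) (a : V) : bal E [a] = 0 := rfl
lemma bal_cons_cons (E : V → V → Prop) (u v : V) (r : List V) :
    bal E (u :: v :: r) = stp E u v + bal E (v :: r) := rfl

lemma stp_self (E : V → V → Prop) (u : V) : stp E u u = 0 := by
  simp [stp]

lemma bal_append (E : V → V → Prop) (l₂ : List V) :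
    ∀ (l₁ : List V) (x : V), l₁.getLast? = some x →
      bal E (l₁ ++ l₂) = bal E l₁ + bal E (x :: l₂) := by
  intro l₁
  induction l₁ with
  | nil => simp
  | cons a r ih =>
    intro x hx
    cases r with
    | nil =>
      simp at hx
      subst hx
      simp [bal_single]
    | cons b r' =>
      rw [List.getLast?_cons_cons] at hx
      have := ih x hx
      simp only [List.cons_append, bal_cons_cons] at *
      rw [this]; ring


open Classical in
noncomputable def dd : List V → List V
  | a :: b :: l => if a = b then dd (a :: l) else a :: dd (b :: l)
  | l => l

lemma dd_head? : ∀ l : List V, (dd l).head? = l.head?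
  | [] => by rw [dd] <;> simp
  | [a] => by rw [dd] <;> simp
  | a :: b :: l => by
    rw [dd]
    split
    · rename_i h; subst h; rw [dd_head? (a :: l)]; simp
    · rfl

lemma dd_cons (b : V) (l : List V) : ∃ r : List V, dd (b :: l) = b :: r := by
  have h := dd_head? (b :: l)
  cases hdd : dd (b :: l) with
  | nil => rw [hdd] at h; simp at h
  | cons c cs =>
    rw [hdd] at h
    simp at h
    subst h
    exact ⟨cs, rfl⟩

lemma dd_getLast? : ∀ l : List V, (dd l).getLast? = l.getLast?
  | [] => by rw [dd] <;> simp
  | [a] => by rw [dd] <;> simp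
  | a :: b :: l => by
    rw [dd]
    split
    · rename_i h
      subst h
      rw [dd_getLast? (a :: l), List.getLast?_cons_cons]
    · obtain ⟨r, hr⟩ := dd_cons b l
      have h2 := dd_getLast? (b :: l)
      rw [hr] at h2 ⊢
      rw [List.getLast?_cons_cons, List.getLast?_cons_cons, h2]

lemma dd_bal (E : V → V → Prop) : ∀ l : List V, bal E (dd l) = bal E l
  | [] => by rw [dd] <;> simp
  | [a] => by rw [dd] <;> simp
  | a :: b :: l => by
    rw [dd]
    split
    · rename_i h
      subst h
      rw [dd_bal E (a :: l), bal_cons_cons, stp_self]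
      ring
    · obtain ⟨r, hr⟩ := dd_cons b l
      rw [hr, bal_cons_cons, ← hr, dd_bal E (b :: l), bal_cons_cons]

lemma dd_chain (E : V → V → Prop) :
    ∀ l : List V, l.Chain' (fun u v => E u v ∨ E v u ∨ u = v) →
      (dd l).Chain' (fun u v => E u v ∨ E v u)
  | [] => by rw [dd] <;> simp [List.Chain']
  | [a] => by rw [dd] <;> simp [List.Chain']
  | a :: b :: l => by
    intro hc
    simp only [List.Chain'] at hc ⊢
    rw [List.isChain_cons_cons] at hc
    rw [dd]
    split
    · rename_i h
      subst h
      exact dd_chain E (a :: l) hc.2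
    · rename_i h
      rw [List.isChain_cons]
      refine ⟨?_, dd_chain E (b :: l) hc.2⟩
      intro y hy
      rw [dd_head? (b :: l)] at hy
      simp at hy
      subst hy
      rcases hc.1 with h1 | h1 | h1
      · exact Or.inl h1
      · exact Or.inr h1
      · exact absurd h1 h

/-- The graph `G''`: `G` together with a directed path of `k` new edges from the new
vertex `t' = w₀` through new vertices `w₁, …, w_{k-1}` to `t` (`w_k = t`). -/
def extGraph (E : V → V → Prop) (t : V) (k : ℕ) : (V ⊕ Fin k) → (V ⊕ Fin k) → Prop :=
  fun a b =>
    match a, b with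
    | Sum.inl u, Sum.inl v => E u v
    | Sum.inr i, Sum.inr j => (j : ℕ) = (i : ℕ) + 1
    | Sum.inr i, Sum.inl v => (i : ℕ) + 1 = k ∧ v = t
    | Sum.inl _, Sum.inr _ => False

/-- The new vertex `t' = w₀` (when `k = 0`, `t' = t` itself). -/
def extStart {V : Type*} (t : V) (k : ℕ) : V ⊕ Fin k :=
  if h : 0 < k then Sum.inr ⟨0, h⟩ else Sum.inl t

def proj (t : V) {k : ℕ} : V ⊕ Fin k → V := Sum.elim id fun _ => t

def ht (k : ℕ) : V ⊕ Fin k → ℤ := Sum.elim (fun _ => (k : ℤ)) fun i => (i : ℤ)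

lemma stp_ext (E : V → V → Prop) (t : V) (k : ℕ) (a b : V ⊕ Fin k)
    (h : extGraph E t k a b ∨ extGraph E t k b a) :
    stp (extGraph E t k) a b = stp E (proj t a) (proj t b) + (ht k b - ht k a) := by
  rcases a with u | i <;> rcases b with v | j
  · simp only [proj, ht, Sum.elim_inl]
    have h1 : extGraph E t k (Sum.inl u) (Sum.inl v) = E u v := rfl
    have h2 : extGraph E t k (Sum.inl v) (Sum.inl u) = E v u := rfl
    rw [stp, stp, h1, h2]
    simp only [id_eq]
    ring
  · -- inl u to inr j : only backward possible
    simp only [extGraph] at h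
    obtain ⟨hk, hv⟩ := h.resolve_left (by simp [extGraph])
    have h1 : stp (extGraph E t k) (Sum.inl u) (Sum.inr j) = -1 := by
      rw [stp]
      rw [if_neg (by simp [extGraph]), if_pos (by exact ⟨⟨hk, hv⟩, by simp [extGraph]⟩)]
    rw [h1]
    simp only [proj, ht, Sum.elim_inl, Sum.elim_inr, id_eq, hv]
    rw [stp_self]
    omega
  · -- inr i to inl v : forward
    simp only [extGraph] at h
    obtain ⟨hk, hv⟩ := h.resolve_right (by simp [extGraph])
    have h1 : stp (extGraph E t k) (Sum.inr i) (Sum.inl v) = 1 := by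
      rw [stp]
      rw [if_pos (by exact ⟨⟨hk, hv⟩, by simp [extGraph]⟩)]
    rw [h1]
    simp only [proj, ht, Sum.elim_inl, Sum.elim_inr, id_eq, hv]
    rw [stp_self]
    omega
  · -- inr inr
    simp only [extGraph] at h
    simp only [proj, ht, Sum.elim_inr]
    rw [stp_self]
    rcases h with h | h
    · have h1 : stp (extGraph E t k) (Sum.inr i) (Sum.inr j) = 1 := by
        rw [stp, if_pos]
        refine ⟨h, ?_⟩
        show ¬ ((i : ℕ) = (j : ℕ) + 1)
        omega
      rw [h1]; omega
    · have h1 : stp (extGraph E t k) (Sum.inr i) (Sum.inr j) = -1 := by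
        rw [stp, if_neg, if_pos]
        · exact ⟨h, by show ¬ ((j : ℕ) = (i : ℕ) + 1); omega⟩
        · show ¬ (((j : ℕ) = (i : ℕ) + 1) ∧ ¬ ((i : ℕ) = (j : ℕ) + 1))
          omega
      rw [h1]; omega

lemma bal_proj (E : V → V → Prop) (t : V) (k : ℕ) :
    ∀ l : List (V ⊕ Fin k),
      l.Chain' (fun a b => extGraph E t k a b ∨ extGraph E t k b a) →
      ∀ x ∈ l.getLast?, ∀ y ∈ l.head?,
        bal (extGraph E t k) l = bal E (l.map (proj t)) + (ht k x - ht k y) := by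
  intro l
  induction l with
  | nil => simp
  | cons a r ih =>
    cases r with
    | nil =>
      intro _ x hx y hy
      simp at hx hy
      subst hx; subst hy
      simp [bal_single]
    | cons b r' =>
      intro hch x hx y hy
      simp only [List.Chain'] at hch
      rw [List.isChain_cons_cons] at hch
      rw [List.getLast?_cons_cons] at hx
      simp at hy
      subst hy
      have ihb := ih hch.2 x hx b (by simp)
      rw [bal_cons_cons, ihb, stp_ext E t k a b hch.1]
      simp only [List.map_cons]
      rw [bal_cons_cons]
      ring

lemma stp_inl (E : V → V → Prop) (t : V) (k : ℕ) (u v : V) :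
    stp (extGraph E t k) (Sum.inl u) (Sum.inl v) = stp E u v := rfl

lemma bal_map_inl (E : V → V → Prop) (t : V) (k : ℕ) :
    ∀ p : List V, bal (extGraph E t k) (p.map Sum.inl) = bal E p := by
  intro p
  induction p with
  | nil => simp [bal_nil]
  | cons a r ih =>
    cases r with
    | nil => simp [bal_single]
    | cons b r' =>
      simp only [List.map_cons] at *
      rw [bal_cons_cons, bal_cons_cons, stp_inl, ih]

/-- The list `[j-1, j-2, …, 0]` of elements of `Fin k`. -/
def down (k : ℕ) : ℕ → List (Fin k)
  | 0 => []
  | j + 1 => if h : j < k then ⟨j, h⟩ :: down k j else []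

lemma down_head? (k j : ℕ) (h : j < k) : (down k (j + 1)).head? = some ⟨j, h⟩ := by
  rw [down, dif_pos h]; rfl

lemma down_getLast? (k : ℕ) (hk : 0 < k) : ∀ j, j ≤ k → 0 < j →
    (down k j).getLast? = some (⟨0, hk⟩ : Fin k) := by
  intro j
  induction j with
  | zero => omega
  | succ j ih =>
    intro hjk _
    rcases Nat.eq_zero_or_pos j with hj | hj
    · subst hj; rw [down, dif_pos (by omega)]; rfl
    · have hd : down k j = ⟨j - 1, by omega⟩ :: down k (j - 1) := by
        conv_lhs => rw [show j = (j - 1) + 1 by omega, down]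
        rw [dif_pos (show j - 1 < k by omega)]
      rw [down, dif_pos (by omega), hd, List.getLast?_cons_cons, ← hd, ih (by omega) hj]

lemma stp_inr_succ (E : V → V → Prop) (t : V) (k : ℕ) (i j : Fin k)
    (h : (i : ℕ) = (j : ℕ) + 1) :
    stp (extGraph E t k) (Sum.inr i) (Sum.inr j) = -1 := by
  rw [stp, if_neg, if_pos]
  · exact ⟨h, by show ¬ ((j : ℕ) = (i : ℕ) + 1); omega⟩
  · show ¬ (((j : ℕ) = (i : ℕ) + 1) ∧ ¬ ((i : ℕ) = (j : ℕ) + 1))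
    omega

lemma bal_down (E : V → V → Prop) (t : V) (k : ℕ) :
    ∀ j (h : j < k),
      bal (extGraph E t k) (Sum.inr ⟨j, h⟩ :: (down k j).map Sum.inr) = -(j : ℤ) := by
  intro j
  induction j with
  | zero => intro h; rw [down]; simp [bal_single]
  | succ j ih =>
    intro h
    rw [down, dif_pos (show j < k by omega), List.map_cons, bal_cons_cons,
      stp_inr_succ E t k _ _ (by simp), ih (by omega)]
    push_cast
    ring

lemma chain_down (E : V → V → Prop) (t : V) (k : ℕ) :
    ∀ j (h : j < k),
      (Sum.inr ⟨j, h⟩ :: (down k j).map Sum.inr).Chain'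
        (fun a b => extGraph E t k a b ∨ extGraph E t k b a) := by
  intro j
  induction j with
  | zero => intro h; rw [down]; simp [List.Chain']
  | succ j ih =>
    intro h
    rw [down, dif_pos (show j < k by omega), List.map_cons]
    simp only [List.Chain']
    rw [List.isChain_cons_cons]
    exact ⟨Or.inr (by show (_ : ℕ) = _ + 1; simp), ih (by omega)⟩

/-- `p` is a walk from `s` to `t` in the underlying undirected graph of the digraph `E`. -/
def IsWalk (E : V → V → Prop) (s t : V) (p : List V) : Prop :=
  p.head? = some s ∧ p.getLast? = some t ∧ p.Chain' (fun u v => E u v ∨ E v u)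

lemma ht_extStart (t : V) (k : ℕ) : ht k (extStart t k) = 0 := by
  unfold extStart
  split
  · simp [ht]
  · simp [ht]; omega

lemma proj_extStart (t : V) (k : ℕ) : proj t (extStart t k) = t := by
  unfold extStart
  split <;> rfl

theorem kBalanced_iff_balanced_ext (E : V → V → Prop) (s t : V) (k : ℕ) :
    (∃ p : List V, IsWalk E s t p ∧ bal E p = (k : ℤ)) ↔
    (∃ p : List (V ⊕ Fin k),
      IsWalk (extGraph E t k) (Sum.inl s) (extStart t k) p ∧ bal (extGraph E t k) p = 0) := by
  constructor
  · rintro ⟨p, ⟨hh, hl, hc⟩, hb⟩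
    have hchain_inl : (p.map Sum.inl).Chain'
        (fun a b => extGraph E t k a b ∨ extGraph E t k b a) := by
      simp only [List.Chain']
      rw [List.isChain_map]
      exact List.IsChain.imp (fun a b hab => hab) hc
    rcases Nat.eq_zero_or_pos k with hk | hk
    · subst hk
      refine ⟨p.map Sum.inl, ⟨?_, ?_, hchain_inl⟩, ?_⟩
      · rw [List.head?_map, hh]; rfl
      · rw [List.getLast?_map, hl, extStart, dif_neg (by omega)]; rfl
      · rw [bal_map_inl, hb]; rfl
    · have h1 : down k k = ⟨k - 1, by omega⟩ :: down k (k - 1) := by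
        have h2 : down k ((k - 1) + 1) = ⟨k - 1, by omega⟩ :: down k (k - 1) := by
          rw [down, dif_pos (by omega)]
        rwa [Nat.sub_add_cancel hk] at h2
      refine ⟨p.map Sum.inl ++ (down k k).map Sum.inr, ⟨?_, ?_, ?_⟩, ?_⟩
      · cases p with
        | nil => simp at hh
        | cons a p' =>
          simp at hh
          subst hh
          rfl
      · rw [List.getLast?_append, List.getLast?_map, down_getLast? k hk k le_rfl hk]
        rw [extStart, dif_pos hk]
        rfl
      · simp only [List.Chain']
        rw [List.isChain_append]
        refine ⟨hchain_inl, ?_, ?_⟩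
        · rw [h1]
          simpa [List.Chain'] using chain_down E t k (k - 1) (by omega)
        · intro x hx y hy
          rw [List.getLast?_map, hl] at hx
          simp at hx
          subst hx
          rw [h1] at hy
          simp at hy
          subst hy
          exact Or.inr ⟨by simp; omega, rfl⟩
      · have htail := bal_down E t k (k - 1) (by omega)
        have hstp : stp (extGraph E t k) (Sum.inl t) (Sum.inr ⟨k - 1, by omega⟩) = -1 := by
          rw [stp, if_neg (by simp [extGraph]), if_pos ⟨⟨by simp; omega, rfl⟩, by simp [extGraph]⟩]
        rw [bal_append _ _ _ (Sum.inl t) (by rw [List.getLast?_map, hl]; rfl)]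
        rw [bal_map_inl, hb]
        rw [h1, List.map_cons, bal_cons_cons, hstp, htail]
        omega
  · rintro ⟨q, ⟨hh, hl, hc⟩, hb⟩
    have hchain : (q.map (proj t)).Chain' (fun u v => E u v ∨ E v u ∨ u = v) := by
      simp only [List.Chain']
      rw [List.isChain_map]
      refine List.IsChain.imp (fun a b hab => ?_) hc
      rcases a with u | i <;> rcases b with v | j
      · rcases hab with h | h
        · exact Or.inl h
        · exact Or.inr (Or.inl h)
      · rcases hab with h | h
        · exact absurd h id
        · exact Or.inr (Or.inr h.2)
      · rcases hab with h | h
        · exact Or.inr (Or.inr h.2.symm)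
        · exact absurd h id
      · exact Or.inr (Or.inr rfl)
    have hbp : bal E (q.map (proj t)) = (k : ℤ) := by
      have := bal_proj E t k q hc (extStart t k) hl (Sum.inl s) hh
      rw [hb, ht_extStart] at this
      have hts : ht k (Sum.inl s) = (k : ℤ) := rfl
      rw [hts] at this
      linarith
    refine ⟨dd (q.map (proj t)), ⟨?_, ?_, dd_chain E _ hchain⟩, ?_⟩
    · rw [dd_head?, List.head?_map, hh]; rfl
    · rw [dd_getLast?, List.getLast?_map, hl]
      simp [proj_extStart]
    · rw [dd_bal, hbp]
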